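/- Let f, g, f̂, ĝ be real numbers with g, ĝ > 0, 0 ≤ f/g ≤ 1 and 0 ≤ f̂/ĝ ≤ 1, and set g* = (g + ĝ)/2. Then |f/g − f̂/ĝ| ≤ |f − f̂|/g* + |g − ĝ|/g*. -/

import Mathlib

/-- **Ratio-difference decomposition with symmetrized denominator.** For reals
`f, g, f̂, ĝ` with `g, ĝ > 0`, `0 ≤ f/g ≤ 1`, `0 ≤ f̂/ĝ ≤ 1`, and
`g* = (g + ĝ)/2`, one has `|f/g − f̂/ĝ| ≤ |f − f̂|/g* + |g − ĝ|/g*`. -/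
theorem stmt16 (f g fh gh : ℝ) (hg : 0 < g) (hgh : 0 < gh)
    (h1 : 0 ≤ f / g) (h2 : f / g ≤ 1) (h3 : 0 ≤ fh / gh) (h4 : fh / gh ≤ 1) :
    |f / g - fh / gh| ≤ |f - fh| / ((g + gh) / 2) + |g - gh| / ((g + gh) / 2) := by
  set gs := (g + gh) / 2 with hgs_def
  have hgs : 0 < gs := by positivity
  have key : f / g - fh / gh
      = (f - fh) / gs + (gh - g) / (2 * gs) * (f / g + fh / gh) := by
    rw [hgs_def]
    field_simp
    ring
  rw [key]
  calc |(f - fh) / gs + (gh - g) / (2 * gs) * (f / g + fh / gh)|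
      ≤ |(f - fh) / gs| + |(gh - g) / (2 * gs) * (f / g + fh / gh)| := abs_add_le _ _
    _ ≤ |f - fh| / gs + |g - gh| / gs := by
        gcongr
        · rw [abs_div, abs_of_pos hgs]
        · rw [abs_mul, abs_div, abs_of_pos (by positivity : (0:ℝ) < 2 * gs)]
          have hsum : |f / g + fh / gh| ≤ 2 := by
            rw [abs_of_nonneg (by linarith)]; linarith
          have : |gh - g| = |g - gh| := abs_sub_comm _ _
          rw [this]
          calc |g - gh| / (2 * gs) * |f / g + fh / gh|
              ≤ |g - gh| / (2 * gs) * 2 := by gcongr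
            _ = |g - gh| / gs := by field_simp
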